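/- Let X, Y be Hilbert spaces, A : X → Y bounded linear with weakly closed domain, C weakly closed containing a solution of Ax = y, and suppose x† ∈ R(A*), say x† = A*w. Let ‖y^δ − y‖ ≤ δ, α ∝ δ, and x_{m(δ)} ∈ X_{m(δ)} with ‖x_{m(δ)} − x†‖²/δ → 0. Then the minimum-norm solution x† in R(A*) is unique and the regularized solutions x^δ_{m,α} ∈ argmin_{z∈X_m} ‖Az − y^δ‖² + α‖z‖² satisfy ‖A x^δ_{m(δ),α(δ)} − y^δ‖ ≤ max{O(δ), O(f(m(δ))^{1/2})} and ‖x^δ_{m(δ),α(δ)} − x†‖ ≤ max{O(δ^{1/2}), O(δ^{−1/2} f(m(δ))^{1/2})}, where ‖x_m − x†‖² = O(f(m)). -/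

import Mathlib

open Filter Topology

/-- Weak convergence of a sequence in a real inner product space. -/
def WeaklyConv {H : Type*} [NormedAddCommGroup H] [InnerProductSpace ℝ H]
    (x : ℕ → H) (l : H) : Prop :=
  ∀ z : H, Tendsto (fun n => (inner ℝ (x n) z : ℝ)) atTop (nhds (inner ℝ l z))

/-- A set is weakly sequentially closed. -/
def WeaklySeqClosed {H : Type*} [NormedAddCommGroup H] [InnerProductSpace ℝ H]
    (C : Set H) : Prop :=
  ∀ (x : ℕ → H) (l : H), (∀ n, x n ∈ C) → WeaklyConv x l → l ∈ C

/-- An operator `F` with domain `D` is weakly closed: if `x n ⇀ l` and `F (x n) ⇀ w`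
then `l ∈ D` and `F l = w`. -/
def WeaklyClosedMap {X Y : Type*} [NormedAddCommGroup X] [InnerProductSpace ℝ X]
    [NormedAddCommGroup Y] [InnerProductSpace ℝ Y] (F : X → Y) (D : Set X) : Prop :=
  ∀ (x : ℕ → X) (l : X) (w : Y), (∀ n, x n ∈ D) → WeaklyConv x l →
    WeaklyConv (fun n => F (x n)) w → l ∈ D ∧ F l = w



private lemma le_of_sq_le_sq'' (a b : ℝ) (hb : 0 ≤ b) (h : a^2 ≤ b^2) : a ≤ b := by
  by_contra h'
  push_neg at h'
  nlinarith

set_option maxHeartbeats 2000000 in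
private lemma rates_arith (c δ r s d e nw nA B φ σ sc C1r M2 C1e : ℝ)
    (hc : 0 < c) (hδ : 0 < δ) (hδ1 : δ < 1)
    (hr0 : 0 ≤ r) (hs0 : 0 ≤ s) (hd0 : 0 ≤ d) (he0 : 0 ≤ e)
    (hnw0 : 0 ≤ nw) (hnA0 : 0 ≤ nA) (hB0 : 0 ≤ B) (hφ0 : 0 ≤ φ)
    (hσ0 : 0 < σ) (hσ2 : σ^2 = δ) (hsc0 : 0 ≤ sc) (hsc2 : sc^2 = c)
    (hC1r : C1r = nA * B + sc * B + 2 * c * nw + 1)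
    (hM2 : M2 = 2 * nA ^ 2 * B ^ 2 + 2 + c * B ^ 2 + 2 * c * nw * (nA * B + 1)
        + 2 * c * nw * C1r)
    (hC1e0 : 0 ≤ C1e) (hC1e2 : C1e ^ 2 = M2 / c)
    (heB : e ≤ B * φ) (hsb : s ≤ nA * e + δ)
    (hkey : r ^ 2 + c * δ * d ^ 2 ≤ s ^ 2 + c * δ * e ^ 2 + 2 * (c * δ) * nw * (s + r)) :
    r ≤ C1r * max δ φ ∧ d ≤ (C1r + C1e + 1) * max σ (φ / σ) := by
  have hσ1 : σ ≤ 1 := by nlinarith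
  have hC1r0 : 0 < C1r := by rw [hC1r]; positivity
  have hM20 : 0 ≤ M2 := by rw [hM2]; positivity
  have hcδ : 0 < c * δ := by positivity
  -- residual bound, raw form
  have hres : r ≤ s + 2 * c * nw * δ + sc * σ * e := by
    by_contra h'
    push_neg at h'
    have h1 : r ^ 2 ≤ s ^ 2 + c * δ * e ^ 2 + 2 * (c * δ) * nw * (s + r) := by
      nlinarith [mul_nonneg hcδ.le (sq_nonneg d)]
    set u : ℝ := sc * σ * e with hu
    have hu2 : u ^ 2 = c * δ * e ^ 2 := by rw [hu, mul_pow, mul_pow, hsc2, hσ2]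
    have hu0 : 0 ≤ u := by positivity
    have hrpos : 0 < r := lt_of_le_of_lt (by positivity) h'
    have hprod : 0 < (r - s - 2 * c * nw * δ - u) * (r + s + u) :=
      mul_pos (by linarith) (by linarith)
    nlinarith [hprod, h1, hu2, mul_nonneg hs0 hu0,
      mul_nonneg (mul_nonneg (mul_nonneg hc.le hδ.le) hnw0) hu0]
  have hmaxδφ1 : δ ≤ max δ φ := le_max_left _ _
  have hmaxδφ2 : φ ≤ max δ φ := le_max_right _ _
  have hresb : r ≤ C1r * max δ φ := by
    have h3 : sc * σ * e ≤ sc * B * φ := by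
      have h4 : σ * e ≤ 1 * (B * φ) := by
        apply mul_le_mul hσ1 heB he0 one_pos.le
      nlinarith
    have h5 : s ≤ nA * (B * φ) + δ := by nlinarith
    rw [hC1r]
    nlinarith [mul_nonneg (mul_nonneg hnA0 hB0) (le_trans hφ0 hmaxδφ2),
      mul_nonneg (mul_nonneg hsc0 hB0) (le_trans hφ0 hmaxδφ2),
      mul_nonneg (mul_nonneg (mul_nonneg (by norm_num : (0:ℝ) ≤ 2) hc.le) hnw0) (le_trans hδ.le hmaxδφ1)]
  refine ⟨hresb, ?_⟩
  -- error bound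
  set μ : ℝ := max (δ ^ 2) (φ ^ 2) with hμ
  have hμ1 : δ ^ 2 ≤ μ := le_max_left _ _
  have hμ2 : φ ^ 2 ≤ μ := le_max_right _ _
  have hμδφ : δ * φ ≤ μ := by nlinarith [sq_nonneg (δ - φ)]
  have hδr : δ * r ≤ C1r * μ := by
    have h1 : δ * r ≤ δ * (C1r * max δ φ) := by nlinarith
    have h2 : δ * max δ φ ≤ μ := by
      rcases le_total δ φ with h | h
      · rw [max_eq_right h]; exact hμδφ
      · rw [max_eq_left h]
        have : δ * δ = δ ^ 2 := by ring
        linarith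
    nlinarith
  have herr2 : c * δ * d ^ 2 ≤ M2 * μ := by
    have hb1 : s ^ 2 ≤ 2 * nA ^ 2 * B ^ 2 * φ ^ 2 + 2 * δ ^ 2 := by
      nlinarith [mul_le_mul_of_nonneg_left heB hnA0, sq_nonneg (nA * e - δ),
        sq_nonneg (nA * B * φ - δ), mul_le_mul heB heB he0 (by positivity : (0:ℝ) ≤ B * φ),
        sq_nonneg (nA * B * φ + δ)]
    have he2 : e ^ 2 ≤ B ^ 2 * φ ^ 2 := by
      nlinarith [mul_le_mul heB heB he0 (by positivity : (0:ℝ) ≤ B * φ)]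
    have hb2 : c * δ * e ^ 2 ≤ c * B ^ 2 * φ ^ 2 := by
      have h1 := mul_le_mul_of_nonneg_left he2 hcδ.le
      have h2 : c * δ * (B ^ 2 * φ ^ 2) ≤ c * (B ^ 2 * φ ^ 2) := by
        apply mul_le_mul_of_nonneg_right _ (by positivity)
        nlinarith
      nlinarith [h1, h2]
    have hb3 : 2 * (c * δ) * nw * s ≤ 2 * c * nw * (nA * B + 1) * μ := by
      have h7 : δ * s ≤ nA * B * (δ * φ) + δ ^ 2 := by
        nlinarith [mul_le_mul_of_nonneg_left hsb hδ.le,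
          mul_le_mul_of_nonneg_left heB (mul_nonneg hnA0 hδ.le)]
      have h8 : δ * s ≤ (nA * B + 1) * μ := by
        nlinarith [mul_le_mul_of_nonneg_left hμδφ (mul_nonneg hnA0 hB0)]
      calc 2 * (c * δ) * nw * s = 2 * c * nw * (δ * s) := by ring
        _ ≤ 2 * c * nw * ((nA * B + 1) * μ) :=
            mul_le_mul_of_nonneg_left h8 (by positivity)
        _ = 2 * c * nw * (nA * B + 1) * μ := by ring
    have hb4 : 2 * (c * δ) * nw * r ≤ 2 * c * nw * C1r * μ := by
      calc 2 * (c * δ) * nw * r = 2 * c * nw * (δ * r) := by ring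
        _ ≤ 2 * c * nw * (C1r * μ) := mul_le_mul_of_nonneg_left hδr (by positivity)
        _ = 2 * c * nw * C1r * μ := by ring
    rw [hM2]
    linarith only [hkey, sq_nonneg r, hb1, hb2, hb3, hb4,
      mul_le_mul_of_nonneg_left hμ1 (by positivity : (0:ℝ) ≤ 2),
      mul_le_mul_of_nonneg_left hμ2 (by positivity : (0:ℝ) ≤ 2 * nA ^ 2 * B ^ 2),
      mul_le_mul_of_nonneg_left hμ2 (by positivity : (0:ℝ) ≤ c * B ^ 2)]
  rcases le_total (φ / σ) σ with hcase | hcase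
  · rw [max_eq_left hcase]
    have hφδ : φ ≤ δ := by
      have h8 := (div_le_iff₀ hσ0).mp hcase
      have h9 : σ * σ = δ := by rw [← hσ2]; ring
      linarith
    have hd2 : d ^ 2 ≤ M2 / c * δ := by
      have h9 : μ = δ ^ 2 := max_eq_left (pow_le_pow_left₀ hφ0 hφδ 2)
      have h11 : c * δ * d ^ 2 ≤ M2 * δ ^ 2 := by rw [← h9]; exact herr2
      have h12 : d ^ 2 ≤ M2 * δ ^ 2 / (c * δ) := (le_div_iff₀ hcδ).mpr (by linarith)
      have h13 : M2 * δ ^ 2 / (c * δ) = M2 / c * δ := by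
        field_simp
      linarith [h13 ▸ h12]
    apply le_of_sq_le_sq'' _ _ (by positivity)
    have h14 : 0 ≤ ((C1r + 1) ^ 2 + 2 * (C1r + 1) * C1e) * δ := by positivity
    calc d ^ 2 ≤ M2 / c * δ := hd2
      _ = ((C1r + C1e + 1) * σ) ^ 2 - ((C1r + 1) ^ 2 + 2 * (C1r + 1) * C1e) * δ := by
          linear_combination (-δ) * hC1e2 - (C1r + C1e + 1) ^ 2 * hσ2
      _ ≤ ((C1r + C1e + 1) * σ) ^ 2 := by linarith
  · rw [max_eq_right hcase]
    have hδφ : δ ≤ φ := by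
      have h8 := (le_div_iff₀ hσ0).mp hcase
      have h9 : σ * σ = δ := by rw [← hσ2]; ring
      linarith
    have hd2 : d ^ 2 ≤ M2 / c * (φ ^ 2 / δ) := by
      have h10 : μ = φ ^ 2 := max_eq_right (pow_le_pow_left₀ hδ.le hδφ 2)
      have h11 : c * δ * d ^ 2 ≤ M2 * φ ^ 2 := by rw [← h10]; exact herr2
      have h12 : d ^ 2 ≤ M2 * φ ^ 2 / (c * δ) := (le_div_iff₀ hcδ).mpr (by linarith)
      have h13 : M2 * φ ^ 2 / (c * δ) = M2 / c * (φ ^ 2 / δ) := by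
        field_simp
      linarith [h13 ▸ h12]
    apply le_of_sq_le_sq'' _ _ (by positivity)
    have hq : (φ / σ) ^ 2 = φ ^ 2 / δ := by rw [div_pow, hσ2]
    have h6 : 0 ≤ ((C1r + 1) ^ 2 + 2 * (C1r + 1) * C1e) * (φ / σ) ^ 2 := by positivity
    calc d ^ 2 ≤ M2 / c * (φ ^ 2 / δ) := hd2
      _ = C1e ^ 2 * (φ / σ) ^ 2 := by rw [hC1e2, hq]
      _ ≤ ((C1r + C1e + 1) * (φ / σ)) ^ 2 := by
          have h7 : ((C1r + C1e + 1) * (φ / σ)) ^ 2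
              = C1e ^ 2 * (φ / σ) ^ 2 + ((C1r + 1) ^ 2 + 2 * (C1r + 1) * C1e) * (φ / σ) ^ 2 := by
            ring
          linarith

private lemma key_arith (cd r s d e Is Ia N nw : ℝ) (hcd : 0 ≤ cd)
    (hmin : r ^ 2 + cd * (d ^ 2 + 2 * Is - N) ≤ s ^ 2 + cd * (e ^ 2 + 2 * Ia - N))
    (hin : Ia - Is ≤ (s + r) * nw) :
    r ^ 2 + cd * d ^ 2 ≤ s ^ 2 + cd * e ^ 2 + 2 * cd * nw * (s + r) := by
  nlinarith [mul_le_mul_of_nonneg_left hin hcd]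

/-- Convergence rates in the linear case under the source condition `x† ∈ R(A*)`
(with `x* = 0`), together with uniqueness of the minimum norm solution in `R(A*)`. -/
theorem tikhonov_compact_sets_rates_linear
    {X Y : Type*} [NormedAddCommGroup X] [InnerProductSpace ℝ X] [CompleteSpace X]
    [NormedAddCommGroup Y] [InnerProductSpace ℝ Y] [CompleteSpace Y]
    (A : X →L[ℝ] Y) (D C : Set X) (y : Y)
    (hD : WeaklySeqClosed D) (hC : WeaklySeqClosed C)
    (hex : ∃ x ∈ C ∩ D, A x = y)
    (xdag : X) (hdagmem : xdag ∈ C ∩ D) (hdagsol : A xdag = y)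
    (hdagmin : ∀ z ∈ C ∩ D, A z = y → ‖xdag‖ ≤ ‖z‖)
    (w : Y) (hw : (ContinuousLinearMap.adjoint A) w = xdag)
    (Xm : ℕ → Set X) (hXc : ∀ m, IsCompact (Xm m)) (hXsub : ∀ m, Xm m ⊆ C ∩ D)
    (mft : ℝ → ℕ) (hm : Tendsto mft (nhdsWithin 0 (Set.Ioi 0)) atTop)
    (xapx : ℝ → X) (hapx : ∀ δ > (0:ℝ), xapx δ ∈ Xm (mft δ))
    (hapx0 : Tendsto (fun δ => ‖xapx δ - xdag‖ ^ 2 / δ) (nhdsWithin 0 (Set.Ioi 0)) (nhds 0))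
    (f : ℕ → ℝ) (hfpos : ∀ n, 0 ≤ f n)
    (Cf : ℝ) (hCf : ∀ δ > (0:ℝ), ‖xapx δ - xdag‖ ^ 2 ≤ Cf * f (mft δ))
    (c : ℝ) (hc : 0 < c)
    (ydat : ℝ → Y) (hy : ∀ δ > (0:ℝ), ‖ydat δ - y‖ ≤ δ)
    (xsol : ℝ → X)
    (hsol : ∀ δ > (0:ℝ), xsol δ ∈ Xm (mft δ) ∧ ∀ z ∈ Xm (mft δ),
      ‖A (xsol δ) - ydat δ‖ ^ 2 + (c * δ) * ‖xsol δ‖ ^ 2 ≤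
        ‖A z - ydat δ‖ ^ 2 + (c * δ) * ‖z‖ ^ 2) :
    (∀ x' : X, x' ∈ C ∩ D → A x' = y → (∀ z ∈ C ∩ D, A z = y → ‖x'‖ ≤ ‖z‖) →
        x' ∈ Set.range (ContinuousLinearMap.adjoint A) → x' = xdag) ∧
      ∃ C1 > (0:ℝ), ∃ δ0 > (0:ℝ), ∀ δ : ℝ, 0 < δ → δ < δ0 →
        ‖A (xsol δ) - ydat δ‖ ≤ C1 * max δ ((f (mft δ)) ^ ((1:ℝ)/2)) ∧
        ‖xsol δ - xdag‖ ≤ C1 * max (δ ^ ((1:ℝ)/2)) ((f (mft δ)) ^ ((1:ℝ)/2) / δ ^ ((1:ℝ)/2)) := by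
  constructor
  · rintro x' hx'mem hx'sol _ ⟨v, hv⟩
    have h1 : A (x' - xdag) = 0 := by
      rw [map_sub, hx'sol, hdagsol, sub_self]
    have h2 : (inner ℝ (x' - xdag) (x' - xdag) : ℝ) = 0 := by
      have h3 : x' - xdag = (ContinuousLinearMap.adjoint A) (v - w) := by
        rw [map_sub, hv, hw]
      nth_rewrite 2 [h3]
      rw [ContinuousLinearMap.adjoint_inner_right, h1, inner_zero_left]
    have h4 := inner_self_eq_zero.mp h2
    rw [sub_eq_zero] at h4
    exact h4
  · -- convergence rates
    set nA : ℝ := ‖A‖ with hnA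
    set nw : ℝ := ‖w‖ with hnw
    set B : ℝ := Real.sqrt (max Cf 0) with hB
    set sc : ℝ := Real.sqrt c with hsc
    have hnA0 : 0 ≤ nA := norm_nonneg _
    have hnw0 : 0 ≤ nw := norm_nonneg _
    have hB0 : 0 ≤ B := Real.sqrt_nonneg _
    have hsc0 : 0 ≤ sc := Real.sqrt_nonneg _
    have hB2 : B ^ 2 = max Cf 0 := Real.sq_sqrt (le_max_right _ _)
    have hsc2 : sc ^ 2 = c := Real.sq_sqrt hc.le
    set C1r : ℝ := nA * B + sc * B + 2 * c * nw + 1 with hC1r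
    set M2 : ℝ := 2 * nA ^ 2 * B ^ 2 + 2 + c * B ^ 2 + 2 * c * nw * (nA * B + 1)
        + 2 * c * nw * C1r with hM2
    have hC1r0 : 0 < C1r := by rw [hC1r]; positivity
    have hM20 : 0 ≤ M2 := by rw [hM2, hC1r]; positivity
    set C1e : ℝ := Real.sqrt (M2 / c) with hC1e
    have hC1e0 : 0 ≤ C1e := Real.sqrt_nonneg _
    have hC1e2 : C1e ^ 2 = M2 / c := Real.sq_sqrt (by positivity)
    refine ⟨C1r + C1e + 1, by positivity, 1, one_pos, ?_⟩
    intro δ hδ hδ1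
    set φ : ℝ := Real.sqrt (f (mft δ)) with hφ
    have hφ0 : 0 ≤ φ := Real.sqrt_nonneg _
    have hφ2 : φ ^ 2 = f (mft δ) := Real.sq_sqrt (hfpos _)
    set σ : ℝ := Real.sqrt δ with hσ
    have hσ0 : 0 < σ := Real.sqrt_pos.mpr hδ
    have hσ2 : σ ^ 2 = δ := Real.sq_sqrt hδ.le
    have hrpowf : (f (mft δ)) ^ ((1:ℝ)/2) = φ := by
      rw [hφ, Real.sqrt_eq_rpow]
    have hrpowδ : δ ^ ((1:ℝ)/2) = σ := by
      rw [hσ, Real.sqrt_eq_rpow]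
    set r : ℝ := ‖A (xsol δ) - ydat δ‖ with hr
    set s : ℝ := ‖A (xapx δ) - ydat δ‖ with hs
    set e : ℝ := ‖xapx δ - xdag‖ with he
    set d : ℝ := ‖xsol δ - xdag‖ with hd
    have hr0 : 0 ≤ r := norm_nonneg _
    have hs0 : 0 ≤ s := norm_nonneg _
    have he0 : 0 ≤ e := norm_nonneg _
    have hd0 : 0 ≤ d := norm_nonneg _
    -- e ≤ B * φ
    have heB : e ≤ B * φ := by
      apply le_of_sq_le_sq'' _ _ (by positivity)
      calc e ^ 2 ≤ Cf * f (mft δ) := hCf δ hδ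
        _ ≤ max Cf 0 * f (mft δ) := mul_le_mul_of_nonneg_right (le_max_left _ _) (hfpos _)
        _ = (B * φ) ^ 2 := by rw [mul_pow, hB2, hφ2]
    -- s ≤ nA * e + δ
    have hsb : s ≤ nA * e + δ := by
      have h1 : A (xapx δ) - ydat δ = A (xapx δ - xdag) + (y - ydat δ) := by
        rw [map_sub, hdagsol]; abel
      rw [hs, h1]
      refine (norm_add_le _ _).trans (add_le_add ?_ ?_)
      · exact A.le_opNorm _
      · rw [norm_sub_rev]; exact hy δ hδ
    -- key minimization inequality
    have hmin := (hsol δ hδ).2 (xapx δ) (hapx δ hδ)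
    have hexp1 : ‖xsol δ‖ ^ 2 = d ^ 2 + 2 * (inner ℝ (xsol δ) xdag : ℝ) - ‖xdag‖ ^ 2 := by
      rw [hd, norm_sub_sq_real]; ring
    have hexp2 : ‖xapx δ‖ ^ 2 = e ^ 2 + 2 * (inner ℝ (xapx δ) xdag : ℝ) - ‖xdag‖ ^ 2 := by
      rw [he, norm_sub_sq_real]; ring
    have hinner : (inner ℝ (xapx δ) xdag : ℝ) - (inner ℝ (xsol δ) xdag : ℝ) ≤ (s + r) * nw := by
      have h1 : (inner ℝ (xapx δ) xdag : ℝ) - (inner ℝ (xsol δ) xdag : ℝ)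
          = inner ℝ (A (xapx δ) - A (xsol δ)) w := by
        rw [← inner_sub_left, ← hw, ContinuousLinearMap.adjoint_inner_right, map_sub]
      rw [h1]
      calc (inner ℝ (A (xapx δ) - A (xsol δ)) w : ℝ) ≤ ‖A (xapx δ) - A (xsol δ)‖ * ‖w‖ :=
            real_inner_le_norm _ _
        _ ≤ (s + r) * nw := by
            apply mul_le_mul_of_nonneg_right _ (norm_nonneg _)
            have h2 : A (xapx δ) - A (xsol δ)
                = (A (xapx δ) - ydat δ) - (A (xsol δ) - ydat δ) := by abel
            rw [h2]
            exact norm_sub_le _ _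
    rw [hexp1, hexp2] at hmin
    have hkey : r ^ 2 + c * δ * d ^ 2
        ≤ s ^ 2 + c * δ * e ^ 2 + 2 * (c * δ) * nw * (s + r) :=
      key_arith (c * δ) r s d e _ _ _ nw (by positivity) hmin hinner
    obtain ⟨hres, herr⟩ := rates_arith c δ r s d e nw nA B φ σ sc C1r M2 C1e
      hc hδ hδ1 hr0 hs0 hd0 he0 hnw0 hnA0 hB0 hφ0 hσ0 hσ2 hsc0 hsc2 hC1r hM2
      hC1e0 hC1e2 heB hsb hkey
    have hmax0 : (0:ℝ) ≤ max δ φ := le_trans hδ.le (le_max_left _ _)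
    constructor
    · rw [hrpowf]
      calc r ≤ C1r * max δ φ := hres
        _ ≤ (C1r + C1e + 1) * max δ φ := by
            apply mul_le_mul_of_nonneg_right _ hmax0
            linarith only [hC1e0]
    · rw [hrpowf, hrpowδ]
      exact herr
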